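/- Let X be uniformly distributed on the unit sphere S^{d−1} in ℝ^d. Then for any unit vector a and any r > 0, the probability that |⟨a, X⟩| < r is strictly less than r√d. -/

import Mathlib

open MeasureTheory Real

lemma exists_isometry_aux {n : ℕ} {u v : EuclideanSpace ℝ (Fin n)} (h : ‖u‖ = ‖v‖) :
    ∃ T : EuclideanSpace ℝ (Fin n) ≃ₗᵢ[ℝ] EuclideanSpace ℝ (Fin n), T u = v := by
  rcases eq_or_ne u v with rfl | huv
  · exact ⟨LinearIsometryEquiv.refl ℝ _, rfl⟩
  · exact ⟨Submodule.reflection (ℝ ∙ (u - v))ᗮ, Submodule.reflection_sub h⟩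

lemma gamma_step {x : ℝ} (hx : 1 ≤ x) :
    2 * Real.Gamma (x + 1) < Real.sqrt (2 * x) * Real.sqrt π * Real.Gamma (x + 1/2) := by
  have h1 : (0:ℝ) < x + 1/2 := by linarith
  have hG2 : 0 < Real.Gamma (x + 1/2) := Real.Gamma_pos_of_pos h1
  have hG1 : 0 < Real.Gamma (x + 1) := Real.Gamma_pos_of_pos (by linarith)
  have hG3 : 0 < Real.Gamma (x + 3/2) := Real.Gamma_pos_of_pos (by linarith)
  have hconv := Real.convexOn_log_Gamma
  have h2 := hconv.2 (show x + 1/2 ∈ Set.Ioi (0:ℝ) from h1)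
      (show x + 3/2 ∈ Set.Ioi (0:ℝ) by simp; linarith)
      (by norm_num : (0:ℝ) ≤ 1/2) (by norm_num : (0:ℝ) ≤ 1/2) (by norm_num)
  have harg : (1/2 : ℝ) • (x+1/2) + (1/2 : ℝ) • (x+3/2) = x + 1 := by
    simp only [smul_eq_mul]; ring
  rw [harg] at h2
  simp only [Function.comp_apply, smul_eq_mul] at h2
  have e1 : Real.Gamma (x+1)^2 ≤ Real.Gamma (x+1/2) * Real.Gamma (x+3/2) := by
    have h3 : Real.log (Real.Gamma (x+1)) + Real.log (Real.Gamma (x+1)) ≤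
        Real.log (Real.Gamma (x+1/2)) + Real.log (Real.Gamma (x+3/2)) := by linarith
    have h4 := Real.exp_le_exp.mpr h3
    rw [Real.exp_add, Real.exp_add, Real.exp_log hG1, Real.exp_log hG2, Real.exp_log hG3] at h4
    nlinarith
  have e2 : Real.Gamma (x+3/2) = (x+1/2) * Real.Gamma (x+1/2) := by
    have h5 := Real.Gamma_add_one (ne_of_gt h1)
    rw [show x + 1/2 + 1 = x + 3/2 by ring] at h5
    exact h5
  have key : Real.Gamma (x+1)^2 ≤ (x + 1/2) * Real.Gamma (x+1/2)^2 := by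
    rw [e2] at e1; nlinarith
  have hπ : (3:ℝ) < π := Real.pi_gt_three
  have hrhs : 0 < Real.sqrt (2*x) * Real.sqrt π * Real.Gamma (x+1/2) := by positivity
  have h2x : Real.sqrt (2*x) ^ 2 = 2*x := Real.sq_sqrt (by linarith)
  have hpi2 : Real.sqrt π ^ 2 = π := Real.sq_sqrt (by linarith)
  have hsq : (2 * Real.Gamma (x+1))^2 < (Real.sqrt (2*x) * Real.sqrt π * Real.Gamma (x+1/2))^2 := by
    have expand : (Real.sqrt (2*x) * Real.sqrt π * Real.Gamma (x+1/2))^2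
        = 2*x*π*Real.Gamma (x+1/2)^2 := by rw [mul_pow, mul_pow, h2x, hpi2]
    rw [expand]
    have hmargin : (4*x+2 : ℝ) < 2*x*π := by nlinarith
    have hg2sq : (0:ℝ) < Real.Gamma (x+1/2)^2 := by positivity
    nlinarith [mul_lt_mul_of_pos_right hmargin hg2sq, key]
  exact lt_of_pow_lt_pow_left₀ 2 hrhs.le hsq

theorem stmt_10 (d : ℕ) (hd : 1 ≤ d)
    (μ : Measure (EuclideanSpace ℝ (Fin d))) [IsProbabilityMeasure μ]
    (hsphere : μ (Metric.sphere (0 : EuclideanSpace ℝ (Fin d)) 1)ᶜ = 0)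
    (hinv : ∀ T : EuclideanSpace ℝ (Fin d) ≃ₗᵢ[ℝ] EuclideanSpace ℝ (Fin d),
      μ.map T = μ)
    (a : EuclideanSpace ℝ (Fin d)) (ha : ‖a‖ = 1) (r : ℝ) (hr : 0 < r) :
    (μ {x | |(inner ℝ a x : ℝ)| < r}).toReal < r * Real.sqrt d := by
  have hd1 : (1:ℝ) ≤ Real.sqrt d := by
    rw [show (1:ℝ) = Real.sqrt 1 from (Real.sqrt_one).symm]
    exact Real.sqrt_le_sqrt (by exact_mod_cast hd)
  have hrd : 0 < r * Real.sqrt d := by positivity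
  rcases lt_or_ge 1 (r * Real.sqrt d) with hbig | hsmall
  · calc (μ {x | |(inner ℝ a x : ℝ)| < r}).toReal
        ≤ (μ Set.univ).toReal :=
          ENNReal.toReal_mono (measure_ne_top _ _) (measure_mono (Set.subset_univ _))
      _ = 1 := by simp
      _ < r * Real.sqrt d := hbig
  have hr1 : r ≤ 1 := by nlinarith
  have hae : ∀ᵐ x ∂μ, ‖x‖ = 1 := by
    rw [MeasureTheory.ae_iff]
    have hset : {x : EuclideanSpace ℝ (Fin d) | ¬ ‖x‖ = 1}
        = (Metric.sphere (0 : EuclideanSpace ℝ (Fin d)) 1)ᶜ := by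
      ext x; simp [mem_sphere_zero_iff_norm]
    rw [hset, hsphere]
  have hslabmeas : ∀ v : EuclideanSpace ℝ (Fin d), ∀ s : ℝ,
      MeasurableSet {x : EuclideanSpace ℝ (Fin d) | |(inner ℝ v x : ℝ)| < s} := by
    intro v s
    exact (isOpen_lt ((Continuous.inner continuous_const continuous_id).abs)
      continuous_const).measurableSet
  rcases eq_or_lt_of_le hd with hd1' | hd2
  · -- d = 1
    subst hd1'
    have hz : μ {x | |(inner ℝ a x : ℝ)| < r} = 0 := by
      refine measure_mono_null ?_ hsphere
      intro x hx
      simp only [Set.mem_setOf_eq] at hx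
      simp only [Set.mem_compl_iff, mem_sphere_zero_iff_norm]
      intro hxs
      have hiax : (inner ℝ a x : ℝ) = a 0 * x 0 := by
        simp [PiLp.inner_apply, RCLike.inner_apply, Fin.sum_univ_one, mul_comm]
      have hna : |a 0| = 1 := by
        rw [EuclideanSpace.norm_eq] at ha
        simpa [Fin.sum_univ_one, Real.sqrt_sq_eq_abs] using ha
      have hnx : |x 0| = 1 := by
        rw [EuclideanSpace.norm_eq] at hxs
        simpa [Fin.sum_univ_one, Real.sqrt_sq_eq_abs] using hxs
      rw [hiax, abs_mul, hna, hnx] at hx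
      norm_num at hx
      linarith
    rw [hz]
    simpa using hrd
  -- main case : d ≥ 2
  obtain ⟨m, rfl⟩ : ∃ m, d = m + 1 := ⟨d - 1, (Nat.succ_pred_eq_of_pos (by omega)).symm⟩
  have hm : 1 ≤ m := by omega
  haveI : Nonempty (Fin m) := ⟨⟨0, by omega⟩⟩
  set B : Set (EuclideanSpace ℝ (Fin (m+1))) := Metric.closedBall 0 1 with hB
  set ν : Measure (EuclideanSpace ℝ (Fin (m+1))) := volume.restrict B with hν
  have hνinv : ∀ T : EuclideanSpace ℝ (Fin (m+1)) ≃ₗᵢ[ℝ] EuclideanSpace ℝ (Fin (m+1)),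
      ∀ s : Set (EuclideanSpace ℝ (Fin (m+1))), MeasurableSet s → ν (T ⁻¹' s) = ν s := by
    intro T s hs
    have hTB : T ⁻¹' B = B := by
      ext g
      simp [hB, Metric.mem_closedBall, dist_zero_right, T.norm_map]
    rw [hν, Measure.restrict_apply (T.continuous.measurable hs), Measure.restrict_apply hs]
    have hpre : T ⁻¹' s ∩ B = T ⁻¹' (s ∩ B) := by rw [Set.preimage_inter, hTB]
    rw [hpre]
    exact T.measurePreserving.measure_preimage
      ((hs.inter Metric.isClosed_closedBall.measurableSet).nullMeasurableSet)
  set A : Set (EuclideanSpace ℝ (Fin (m+1)) × EuclideanSpace ℝ (Fin (m+1))) :=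
    {p | |(inner ℝ p.2 p.1 : ℝ)| < r * ‖p.2‖} with hA
  have hAmeas : MeasurableSet A := by
    refine (isOpen_lt ?_ ?_).measurableSet
    · exact (Continuous.inner continuous_snd continuous_fst).abs
    · exact continuous_const.mul (continuous_norm.comp continuous_snd)
  set u : EuclideanSpace ℝ (Fin (m+1)) := EuclideanSpace.single 0 1 with hu
  have hnu : ‖u‖ = 1 := by rw [hu, EuclideanSpace.norm_single]; exact norm_one
  set Su : Set (EuclideanSpace ℝ (Fin (m+1))) := {g | |(inner ℝ g u : ℝ)| < r * ‖g‖} with hSu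
  have hSumeas : MeasurableSet Su := by
    refine (isOpen_lt ?_ ?_).measurableSet
    · exact (Continuous.inner continuous_id continuous_const).abs
    · exact continuous_const.mul continuous_norm
  -- LEFT evaluation of the product measure
  have hleft : (μ.prod ν) A = ν Su := by
    rw [Measure.prod_apply hAmeas]
    have hconst : ∀ᵐ x ∂μ, ν (Prod.mk x ⁻¹' A) = ν Su := by
      refine hae.mono fun x hx => ?_
      obtain ⟨T, hT⟩ := exists_isometry_aux (n := m + 1) (hnu.trans hx.symm)
      have hpre : T ⁻¹' (Prod.mk x ⁻¹' A) = Su := by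
        ext g
        simp only [Set.mem_preimage, Set.mem_setOf_eq, hSu, hA]
        rw [show (inner ℝ (T g) x : ℝ) = (inner ℝ g u : ℝ) by
          rw [← hT]; exact T.inner_map_map g u, T.norm_map]
      rw [← hpre, hνinv T _ (hAmeas.preimage measurable_prodMk_left)]
    calc ∫⁻ x, ν (Prod.mk x ⁻¹' A) ∂μ = ∫⁻ _, ν Su ∂μ := lintegral_congr_ae hconst
      _ = ν Su := by simp
  -- RIGHT evaluation of the product measure
  have hright : (μ.prod ν) A = μ {x | |(inner ℝ a x : ℝ)| < r} * ν Set.univ := by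
    rw [Measure.prod_apply_symm hAmeas]
    have hg0 : ∀ᵐ g ∂ν, g ≠ (0 : EuclideanSpace ℝ (Fin (m+1))) := by
      refine MeasureTheory.ae_iff.mpr ?_
      have h0 : {g : EuclideanSpace ℝ (Fin (m+1)) | ¬ g ≠ 0}
          = {(0 : EuclideanSpace ℝ (Fin (m+1)))} := by ext g; simp
      rw [h0]
      refine le_antisymm (le_trans (Measure.restrict_apply_le _ _)
        (le_of_eq (measure_singleton _))) (by positivity)
    have hconst : ∀ᵐ g ∂ν,
        μ ((fun x => (x, g)) ⁻¹' A) = μ {x | |(inner ℝ a x : ℝ)| < r} := by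
      refine hg0.mono fun g hg => ?_
      have hng : 0 < ‖g‖ := norm_pos_iff.mpr hg
      have hpre1 : ((fun x => (x, g)) ⁻¹' A)
          = {x : EuclideanSpace ℝ (Fin (m+1)) | |(inner ℝ (‖g‖⁻¹ • g) x : ℝ)| < r} := by
        ext x
        simp only [Set.mem_preimage, Set.mem_setOf_eq, hA, real_inner_smul_left, abs_mul,
          abs_inv, abs_norm]
        rw [← div_eq_inv_mul, div_lt_iff₀ hng, mul_comm r ‖g‖]
      have hnv : ‖(‖g‖⁻¹ • g : EuclideanSpace ℝ (Fin (m+1)))‖ = 1 := by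
        rw [norm_smul, norm_inv, norm_norm, inv_mul_cancel₀ hng.ne']
      obtain ⟨T, hT⟩ := exists_isometry_aux (n := m + 1) (ha.trans hnv.symm)
      have hpre2 : {x : EuclideanSpace ℝ (Fin (m+1)) | |(inner ℝ (‖g‖⁻¹ • g) x : ℝ)| < r}
          = T.symm ⁻¹' {x | |(inner ℝ a x : ℝ)| < r} := by
        ext x
        simp only [Set.mem_preimage, Set.mem_setOf_eq]
        rw [show (inner ℝ a (T.symm x) : ℝ) = (inner ℝ (‖g‖⁻¹ • g) x : ℝ) by
          conv_lhs => rw [← T.symm_apply_apply a, hT]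
          exact T.symm.inner_map_map _ x]
      rw [hpre1, hpre2, ← Measure.map_apply T.symm.continuous.measurable (hslabmeas a r),
        hinv T.symm]
    calc ∫⁻ g, μ ((fun x => (x, g)) ⁻¹' A) ∂ν
        = ∫⁻ _, μ {x | |(inner ℝ a x : ℝ)| < r} ∂ν := lintegral_congr_ae hconst
      _ = μ {x | |(inner ℝ a x : ℝ)| < r} * ν Set.univ := lintegral_const _
  -- The volume bound : ν Su ≤ ofReal (2r) * V_{m}
  have hQ : ν Su ≤ ENNReal.ofReal (2*r) *
      ENNReal.ofReal (Real.sqrt π ^ m / Real.Gamma ((m : ℝ)/2 + 1)) := by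
    have hmp1 := EuclideanSpace.volume_preserving_symm_measurableEquiv_toLp (Fin (m+1))
    have hmp2 := MeasureTheory.volume_preserving_piFinSuccAbove (fun _ : Fin (m+1) => ℝ) 0
    have hmp3 := EuclideanSpace.volume_preserving_symm_measurableEquiv_toLp (Fin m)
    set Kp : Set (Fin m → ℝ) := {z | ∑ j, (z j)^2 ≤ 1} with hKp
    have hKpmeas : MeasurableSet Kp := by
      have hms : Measurable fun z : Fin m → ℝ => ∑ j, (z j)^2 :=
        Finset.measurable_sum _ fun j _ => ((measurable_pi_apply j).pow_const 2)
      exact measurableSet_le hms measurable_const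
    have hWmeas' : MeasurableSet (Set.Ioo (-r) r ×ˢ Kp) := measurableSet_Ioo.prod hKpmeas
    set W : Set (EuclideanSpace ℝ (Fin (m+1))) :=
      (MeasurableEquiv.toLp 2 (Fin (m+1) → ℝ)).symm ⁻¹'
        ((MeasurableEquiv.piFinSuccAbove (fun _ : Fin (m+1) => ℝ) 0) ⁻¹'
          (Set.Ioo (-r) r ×ˢ Kp)) with hW
    have hsub : Su ∩ B ⊆ W := by
      rintro g ⟨hg1, hg2⟩
      have hgn : ‖g‖ ≤ 1 := by rwa [hB, Metric.mem_closedBall, dist_zero_right] at hg2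
      simp only [hSu, Set.mem_setOf_eq] at hg1
      have hinner : (inner ℝ g u : ℝ) = g 0 := by
        rw [hu, EuclideanSpace.inner_single_right]; simp
      have habs : |g 0| < r := by
        rw [← hinner]
        calc |(inner ℝ g u : ℝ)| < r * ‖g‖ := hg1
          _ ≤ r * 1 := by nlinarith
          _ = r := mul_one r
      have hnorm : ‖g‖ ^ 2 = ∑ i, (g i)^2 := by
        rw [EuclideanSpace.norm_eq, Real.sq_sqrt (by positivity)]
        simp [sq_abs]
      have hsum : ∑ i : Fin (m+1), (g i)^2 ≤ 1 := by
        rw [← hnorm]; nlinarith [norm_nonneg g]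
      simp only [hW, Set.mem_preimage, Set.mem_prod]
      constructor
      · have h' := abs_lt.mp habs
        simpa [MeasurableEquiv.piFinSuccAbove_apply, MeasurableEquiv.toLp_symm_apply,
          Set.mem_Ioo] using h'
      · show ((MeasurableEquiv.piFinSuccAbove (fun _ : Fin (m+1) => ℝ) 0)
          ((MeasurableEquiv.toLp 2 (Fin (m+1) → ℝ)).symm g)).2 ∈ Kp
        have hmem : (∑ j : Fin m, (g j.succ)^2) ≤ 1 := by
          have hdecomp := Fin.sum_univ_succ (fun i => (g i)^2)
          nlinarith [sq_nonneg (g 0), hsum]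
        exact hmem
    rw [hν, Measure.restrict_apply hSumeas]
    refine le_trans (measure_mono hsub) ?_
    have h1 : volume W = (volume : Measure (Fin (m+1) → ℝ))
        ((MeasurableEquiv.piFinSuccAbove (fun _ : Fin (m+1) => ℝ) 0) ⁻¹'
          (Set.Ioo (-r) r ×ˢ Kp)) :=
      hmp1.measure_preimage
        ((hWmeas'.preimage (MeasurableEquiv.measurable _)).nullMeasurableSet)
    have h2 : (volume : Measure (Fin (m+1) → ℝ))
        ((MeasurableEquiv.piFinSuccAbove (fun _ : Fin (m+1) => ℝ) 0) ⁻¹'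
          (Set.Ioo (-r) r ×ˢ Kp))
        = (volume : Measure (ℝ × (Fin m → ℝ))) (Set.Ioo (-r) r ×ˢ Kp) :=
      hmp2.measure_preimage hWmeas'.nullMeasurableSet
    have h3 : (volume : Measure (ℝ × (Fin m → ℝ))) (Set.Ioo (-r) r ×ˢ Kp)
        = volume (Set.Ioo (-r) r) * volume Kp := by
      rw [Measure.volume_eq_prod, Measure.prod_prod]
    have h4 : volume Kp = volume (Metric.closedBall (0 : EuclideanSpace ℝ (Fin m)) 1) := by
      rw [← hmp3.measure_preimage hKpmeas.nullMeasurableSet]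
      congr 1
      ext z
      simp only [Set.mem_preimage, hKp, Set.mem_setOf_eq, Metric.mem_closedBall,
        dist_zero_right, MeasurableEquiv.toLp_symm_apply]
      have hnz : ‖z‖ ^ 2 = ∑ j, (z j)^2 := by
        rw [EuclideanSpace.norm_eq, Real.sq_sqrt (by positivity)]
        simp [sq_abs]
      constructor <;> intro h <;> nlinarith [norm_nonneg z, hnz]
    rw [h1, h2, h3, h4, EuclideanSpace.volume_closedBall, Fintype.card_fin, Real.volume_Ioo]
    rw [show r - -r = 2*r by ring]
    simp
  -- value of ν univ
  have hc : ν Set.univ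
      = ENNReal.ofReal (Real.sqrt π ^ (m+1) / Real.Gamma (((m:ℝ)+1)/2 + 1)) := by
    rw [hν, Measure.restrict_apply MeasurableSet.univ, Set.univ_inter, hB,
      EuclideanSpace.volume_closedBall, Fintype.card_fin]
    push_cast
    simp
  -- compare
  have hΓ1 : 0 < Real.Gamma ((m:ℝ)/2 + 1) := Real.Gamma_pos_of_pos (by positivity)
  have hΓ2 : 0 < Real.Gamma (((m:ℝ)+1)/2 + 1) := Real.Gamma_pos_of_pos (by positivity)
  have hπp : (0:ℝ) < Real.sqrt π ^ m := by positivity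
  have hreal : 2*r * (Real.sqrt π ^ m / Real.Gamma ((m : ℝ)/2 + 1))
      < r * Real.sqrt ((m:ℝ)+1) * (Real.sqrt π ^ (m+1) / Real.Gamma (((m:ℝ)+1)/2 + 1)) := by
    have hx : (1:ℝ) ≤ ((m:ℝ)+1)/2 := by
      have : (1:ℝ) ≤ (m:ℝ) := by exact_mod_cast hm
      linarith
    have gs := gamma_step hx
    rw [show 2 * (((m:ℝ)+1)/2) = (m:ℝ)+1 by ring,
      show ((m:ℝ)+1)/2 + 1/2 = (m:ℝ)/2 + 1 by ring] at gs
    -- gs : 2 * Γ((m+1)/2 + 1) < √(m+1) * √π * Γ(m/2+1)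
    have lhs_eq : 2*r * (Real.sqrt π ^ m / Real.Gamma ((m : ℝ)/2 + 1))
        = (2*r*Real.sqrt π ^ m) / Real.Gamma ((m : ℝ)/2 + 1) := by ring
    have rhs_eq : r * Real.sqrt ((m:ℝ)+1) * (Real.sqrt π ^ (m+1) / Real.Gamma (((m:ℝ)+1)/2 + 1))
        = (r * Real.sqrt ((m:ℝ)+1) * Real.sqrt π ^ (m+1)) / Real.Gamma (((m:ℝ)+1)/2 + 1) := by
      ring
    rw [lhs_eq, rhs_eq, div_lt_div_iff₀ hΓ1 hΓ2]
    have hra : (0:ℝ) < r * Real.sqrt π ^ m := by positivity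
    have := mul_lt_mul_of_pos_left gs hra
    calc 2*r*Real.sqrt π ^ m * Real.Gamma (((m:ℝ)+1)/2 + 1)
        = r * Real.sqrt π ^ m * (2 * Real.Gamma (((m:ℝ)+1)/2 + 1)) := by ring
      _ < r * Real.sqrt π ^ m * (Real.sqrt ((m:ℝ)+1) * Real.sqrt π * Real.Gamma ((m:ℝ)/2+1)) :=
          this
      _ = r * Real.sqrt ((m:ℝ)+1) * Real.sqrt π ^ (m+1) * Real.Gamma ((m:ℝ)/2+1) := by
          rw [pow_succ]; ring
  have hcompare : ENNReal.ofReal (2*r) *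
      ENNReal.ofReal (Real.sqrt π ^ m / Real.Gamma ((m : ℝ)/2 + 1))
      < ENNReal.ofReal (r * Real.sqrt ((m:ℝ)+1)) * ν Set.univ := by
    rw [hc, ← ENNReal.ofReal_mul (by positivity), ← ENNReal.ofReal_mul (by positivity)]
    refine (ENNReal.ofReal_lt_ofReal_iff ?_).mpr hreal
    have h1 : (0:ℝ) < Real.sqrt π ^ (m+1) / Real.Gamma (((m:ℝ)+1)/2 + 1) := by
      apply div_pos (by positivity) hΓ2
    have h2 : (0:ℝ) < Real.sqrt ((m:ℝ)+1) := by positivity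
    positivity
  have hcne : ν Set.univ ≠ 0 := by
    rw [hc]
    simp only [ne_eq, ENNReal.ofReal_eq_zero, not_le]
    exact div_pos (by positivity) hΓ2
  have hcfin : ν Set.univ ≠ ⊤ := by rw [hc]; exact ENNReal.ofReal_ne_top
  have hfinal : μ {x | |(inner ℝ a x : ℝ)| < r} < ENNReal.ofReal (r * Real.sqrt ((m:ℝ)+1)) := by
    rw [← ENNReal.mul_lt_mul_iff_left hcne hcfin]
    calc μ {x | |(inner ℝ a x : ℝ)| < r} * ν Set.univ = (μ.prod ν) A := hright.symm
      _ = ν Su := hleft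
      _ ≤ ENNReal.ofReal (2*r) *
            ENNReal.ofReal (Real.sqrt π ^ m / Real.Gamma ((m : ℝ)/2 + 1)) := hQ
      _ < ENNReal.ofReal (r * Real.sqrt ((m:ℝ)+1)) * ν Set.univ := hcompare
  have := ENNReal.toReal_lt_of_lt_ofReal hfinal
  convert this using 3
  push_cast
  ring
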